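/- Let f be any RDRD-function of C₃ × C_m and let f_j denote the weight of column j (sum of f over the three vertices with second coordinate j, indices mod m). Then: if f_j = 0 then f_{j−1} + f_{j+1} ≥ 6; if f_j = 1 then f_{j−1} + f_{j+1} ≥ 5; if f_j = 3 then f_{j−1} + f_{j+1} ≥ 3; and if 4 ≤ f_j ≤ 5 then f_{j−1} ≥ 2 or f_{j+1} ≥ 2. -/

import Mathlib

open SimpleGraph Finset

/-- A restrained double Roman dominating function. -/
def IsRDRD {α : Type*} (G : SimpleGraph α) (f : α → ℕ) : Prop :=
  (∀ v, f v ≤ 3) ∧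
  (∀ v, f v = 0 →
    (∃ u, G.Adj v u ∧ f u = 3) ∨
    (∃ u w, u ≠ w ∧ G.Adj v u ∧ G.Adj v w ∧ f u = 2 ∧ f w = 2)) ∧
  (∀ v, f v = 1 → ∃ u, G.Adj v u ∧ 2 ≤ f u) ∧
  (∀ v, f v = 0 → ∃ u, G.Adj v u ∧ f u = 0)

/-- The restrained double Roman domination number. -/
noncomputable def gammaRdR {α : Type*} (G : SimpleGraph α) [Fintype α] : ℕ :=
  sInf {w | ∃ f, IsRDRD G f ∧ ∑ v, f v = w}

/-- The strong product of two simple graphs. -/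
def strongProd {α β : Type*} (G : SimpleGraph α) (H : SimpleGraph β) :
    SimpleGraph (α × β) where
  Adj p q := p ≠ q ∧ (G.Adj p.1 q.1 ∨ p.1 = q.1) ∧ (H.Adj p.2 q.2 ∨ p.2 = q.2)
  symm := by
    refine ⟨?_⟩
    rintro p q ⟨h1, h2, h3⟩
    exact ⟨h1.symm, h2.imp (fun h => h.symm) Eq.symm, h3.imp (fun h => h.symm) Eq.symm⟩
  loopless := by refine ⟨?_⟩; rintro p ⟨h1, _⟩; exact h1 rfl

/-- The cardinal (direct/tensor) product of two simple graphs. -/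
def cardProd {α β : Type*} (G : SimpleGraph α) (H : SimpleGraph β) :
    SimpleGraph (α × β) where
  Adj p q := G.Adj p.1 q.1 ∧ H.Adj p.2 q.2
  symm := by refine ⟨?_⟩; rintro p q ⟨h1, h2⟩; exact ⟨h1.symm, h2.symm⟩
  loopless := by refine ⟨?_⟩; rintro p ⟨h1, _⟩; exact G.irrefl h1

/-- The corona of two simple graphs. -/
def corona {α β : Type*} (G : SimpleGraph α) (H : SimpleGraph β) :
    SimpleGraph (α ⊕ α × β) where
  Adj x y :=
    match x, y with
    | .inl u, .inl v => G.Adj u v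
    | .inl u, .inr (v, _) => u = v
    | .inr (v, _), .inl u => u = v
    | .inr (u, a), .inr (v, b) => u = v ∧ H.Adj a b
  symm := by
    refine ⟨?_⟩
    rintro (u | ⟨u, a⟩) (v | ⟨v, b⟩) h
    · exact h.symm
    · exact h
    · exact h
    · exact ⟨h.1.symm, h.2.symm⟩
  loopless := by
    refine ⟨?_⟩
    rintro (u | ⟨u, a⟩) h
    · exact G.irrefl h
    · exact H.irrefl h.2

lemma cyc_adj (n : ℕ) (j k : Fin (n+3)) :
    (cycleGraph (n+3)).Adj j k ↔ k = j - 1 ∨ k = j + 1 := by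
  have h := @cycleGraph_neighborSet (n+1) j
  have : k ∈ (cycleGraph (n+3)).neighborSet j ↔ k ∈ ({j - 1, j + 1} : Set (Fin (n+3))) := by
    rw [h]
  simpa [mem_neighborSet] using this

lemma fin3_ne (i r : Fin 3) : (cycleGraph 3).Adj i r ↔ r = i + 1 ∨ r = i + 2 := by revert i r; decide

lemma adj_iff (n : ℕ) (i r : Fin 3) (j k : Fin (n+3)) :
    (cardProd (cycleGraph 3) (cycleGraph (n+3))).Adj (i, j) (r, k) ↔
      (r = i + 1 ∨ r = i + 2) ∧ (k = j - 1 ∨ k = j + 1) := by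
  show (cycleGraph 3).Adj i r ∧ (cycleGraph (n+3)).Adj j k ↔ _
  rw [fin3_ne, cyc_adj]

example (a b c x : ℕ) (h : x = 0 → a = 3 ∨ (b = 2 ∧ c = 2)) (hx : x ≤ 0) : a + b + c ≥ 3 := by omega

lemma aux0 (n : ℕ) (f : Fin 3 × Fin (n+3) → ℕ)
    (hf : IsRDRD (cardProd (cycleGraph 3) (cycleGraph (n+3))) f)
    (i : Fin 3) (j : Fin (n+3)) (h : f (i, j) = 0) :
    (f (i+1, j-1) = 3 ∨ f (i+2, j-1) = 3 ∨ f (i+1, j+1) = 3 ∨ f (i+2, j+1) = 3) ∨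
    ((f (i+1, j-1) = 2 ∧ f (i+2, j-1) = 2) ∨ (f (i+1, j-1) = 2 ∧ f (i+1, j+1) = 2) ∨
     (f (i+1, j-1) = 2 ∧ f (i+2, j+1) = 2) ∨ (f (i+2, j-1) = 2 ∧ f (i+1, j+1) = 2) ∨
     (f (i+2, j-1) = 2 ∧ f (i+2, j+1) = 2) ∨ (f (i+1, j+1) = 2 ∧ f (i+2, j+1) = 2)) := by
  rcases (hf.2.1 (i, j) h) with ⟨⟨r, k⟩, hadj, hval⟩ | ⟨⟨r, k⟩, ⟨s, l⟩, hne, ha1, ha2, h2, h2'⟩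
  · rw [adj_iff] at hadj
    obtain ⟨hr | hr, hk | hk⟩ := hadj <;> subst hr <;> subst hk <;> tauto
  · rw [adj_iff] at ha1 ha2
    obtain ⟨hr | hr, hk | hk⟩ := ha1 <;> obtain ⟨hs | hs, hl | hl⟩ := ha2 <;>
      subst hr <;> subst hk <;> subst hs <;> subst hl <;>
      first | exact absurd rfl hne | tauto

lemma aux1 (n : ℕ) (f : Fin 3 × Fin (n+3) → ℕ)
    (hf : IsRDRD (cardProd (cycleGraph 3) (cycleGraph (n+3))) f)
    (i : Fin 3) (j : Fin (n+3)) (h : f (i, j) = 1) :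
    2 ≤ f (i+1, j-1) ∨ 2 ≤ f (i+2, j-1) ∨ 2 ≤ f (i+1, j+1) ∨ 2 ≤ f (i+2, j+1) := by
  rcases (hf.2.2.1 (i, j) h) with ⟨⟨r, k⟩, hadj, hval⟩
  rw [adj_iff] at hadj
  obtain ⟨hr | hr, hk | hk⟩ := hadj <;> subst hr <;> subst hk <;> tauto

set_option maxHeartbeats 2000000 in
theorem stmt11 (m : ℕ) (hm : 3 ≤ m)
    (f : Fin 3 × Fin m → ℕ)
    (hf : IsRDRD (cardProd (SimpleGraph.cycleGraph 3) (SimpleGraph.cycleGraph m)) f)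
    (col : Fin m → ℕ)
    (hcol : ∀ j : Fin m, col j = ∑ i : Fin 3, f (i, j)) :
    ∀ j : Fin m,
      (col j = 0 → 6 ≤ col (j - ⟨1, by omega⟩) + col (j + ⟨1, by omega⟩)) ∧
      (col j = 1 → 5 ≤ col (j - ⟨1, by omega⟩) + col (j + ⟨1, by omega⟩)) ∧
      (col j = 3 → 3 ≤ col (j - ⟨1, by omega⟩) + col (j + ⟨1, by omega⟩)) ∧
      (4 ≤ col j → col j ≤ 5 → 2 ≤ col (j - ⟨1, by omega⟩) ∨ 2 ≤ col (j + ⟨1, by omega⟩)) := by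
  obtain ⟨n, rfl⟩ : ∃ n, m = n + 3 := ⟨m - 3, by omega⟩
  intro j
  have e1 : ∀ (h : 1 < n + 3), (⟨1, h⟩ : Fin (n+3)) = 1 := by
    intro h
    ext
    simp [Fin.val_one]
  rw [e1]
  have Q0 := aux0 n f hf 0 j
  have Q1 := aux0 n f hf 1 j
  have Q2 := aux0 n f hf 2 j
  have R0 := aux1 n f hf 0 j
  have R1 := aux1 n f hf 1 j
  have R2 := aux1 n f hf 2 j
  simp only [show (0:Fin 3)+1 = 1 by decide, show (0:Fin 3)+2 = 2 by decide,
    show (1:Fin 3)+1 = 2 by decide, show (1:Fin 3)+2 = 0 by decide,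
    show (2:Fin 3)+1 = 0 by decide, show (2:Fin 3)+2 = 1 by decide] at Q0 Q1 Q2 R0 R1 R2
  have hcj := hcol j
  have hcm := hcol (j - 1)
  have hcp := hcol (j + 1)
  rw [Fin.sum_univ_three] at hcj hcm hcp
  have B0m := hf.1 (0, j-1); have B1m := hf.1 (1, j-1); have B2m := hf.1 (2, j-1)
  have B0p := hf.1 (0, j+1); have B1p := hf.1 (1, j+1); have B2p := hf.1 (2, j+1)
  have B0 := hf.1 (0, j); have B1 := hf.1 (1, j); have B2 := hf.1 (2, j)
  refine ⟨fun h => ?_, fun h => ?_, fun h => ?_, fun h h' => ?_⟩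
  · -- col j = 0
    have q0 := Q0 (by omega)
    have q1 := Q1 (by omega)
    have q2 := Q2 (by omega)
    clear Q0 Q1 Q2 R0 R1 R2
    omega
  · -- col j = 1
    have hc : (f (0,j) = 1 ∧ f (1,j) = 0 ∧ f (2,j) = 0) ∨
        (f (1,j) = 1 ∧ f (0,j) = 0 ∧ f (2,j) = 0) ∨
        (f (2,j) = 1 ∧ f (0,j) = 0 ∧ f (1,j) = 0) := by omega
    rcases hc with ⟨ha, hb, hd⟩ | ⟨ha, hb, hd⟩ | ⟨ha, hb, hd⟩
    · have r := R0 ha; have q1 := Q1 hb; have q2 := Q2 hd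
      clear Q0 Q1 Q2 R0 R1 R2; omega
    · have r := R1 ha; have q1 := Q0 hb; have q2 := Q2 hd
      clear Q0 Q1 Q2 R0 R1 R2; omega
    · have r := R2 ha; have q1 := Q0 hb; have q2 := Q1 hd
      clear Q0 Q1 Q2 R0 R1 R2; omega
  · -- col j = 3
    have hc : f (0,j) = 0 ∨ f (1,j) = 0 ∨ f (2,j) = 0 ∨
        (f (0,j) = 1 ∧ f (1,j) = 1 ∧ f (2,j) = 1) := by omega
    rcases hc with h0 | h0 | h0 | ⟨ha, hb, hd⟩
    · have q := Q0 h0; clear Q0 Q1 Q2 R0 R1 R2; omega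
    · have q := Q1 h0; clear Q0 Q1 Q2 R0 R1 R2; omega
    · have q := Q2 h0; clear Q0 Q1 Q2 R0 R1 R2; omega
    · have r0 := R0 ha; have r1 := R1 hb; have r2 := R2 hd
      clear Q0 Q1 Q2 R0 R1 R2; omega
  · -- 4 ≤ col j ≤ 5
    have hc : f (0,j) ≤ 1 ∨ f (1,j) ≤ 1 ∨ f (2,j) ≤ 1 := by omega
    rcases hc with h0 | h0 | h0
    · rcases (show f (0,j) = 0 ∨ f (0,j) = 1 by omega) with h1 | h1
      · have q := Q0 h1; clear Q0 Q1 Q2 R0 R1 R2; omega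
      · have r := R0 h1; clear Q0 Q1 Q2 R0 R1 R2; omega
    · rcases (show f (1,j) = 0 ∨ f (1,j) = 1 by omega) with h1 | h1
      · have q := Q1 h1; clear Q0 Q1 Q2 R0 R1 R2; omega
      · have r := R1 h1; clear Q0 Q1 Q2 R0 R1 R2; omega
    · rcases (show f (2,j) = 0 ∨ f (2,j) = 1 by omega) with h1 | h1
      · have q := Q2 h1; clear Q0 Q1 Q2 R0 R1 R2; omega
      · have r := R2 h1; clear Q0 Q1 Q2 R0 R1 R2; omega
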